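/- For positive integers D and N and x ≥ 0, with X_D ~ χ²(D), X_N ~ χ²(N) independent, one has Dkhi(D,N,x) = P(F_{D+2,N} ≥ x/(D+2)) - (x/D)·P(F_{D,N+2} ≥ (N+2)x/(DN)), where Dkhi(D,N,x) = E[(X_D - x X_N/N)₊]/D and F_{a,b} denotes a Fisher (F) random variable with a and b degrees of freedom. -/

import Mathlib

open MeasureTheory ProbabilityTheory Real

open scoped ENNReal NNReal

namespace Stmt5Aux

open Set


lemma measurable_gammaPDF (a r : ℝ) : Measurable (gammaPDF a r) :=
  (measurable_gammaPDFReal a r).ennreal_ofReal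

lemma gammaPDF_mul_self {a : ℝ} (ha : 0 < a) (r : ℝ) (hr : 0 < r) (s : ℝ) :
    gammaPDF a r s * ENNReal.ofReal s
      = ENNReal.ofReal (a / r) * gammaPDF (a + 1) r s := by
  rcases lt_or_ge s 0 with hs | hs
  · rw [gammaPDF_of_neg hs, gammaPDF_of_neg hs]; simp
  · rw [gammaPDF_of_nonneg hs, gammaPDF_of_nonneg hs]
    have hΓ : Gamma (a + 1) = a * Gamma a := Real.Gamma_add_one ha.ne'
    have hΓpos : 0 < Gamma a := Real.Gamma_pos_of_pos ha
    rw [← ENNReal.ofReal_mul (by positivity), ← ENNReal.ofReal_mul (by positivity)]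
    congr 1
    rcases eq_or_lt_of_le hs with rfl | hs'
    · have h1 : (0:ℝ) ^ ((a + 1) - 1) = 0 := by
        rw [show a + 1 - 1 = a by ring]; exact Real.zero_rpow ha.ne'
      simp [h1]
      exact Or.inr (Or.inr (Real.zero_rpow ha.ne'))
    · have h2 : s ^ (a - 1) * s = s ^ ((a+1) - 1) := by
        rw [show (a+1) - 1 = (a - 1) + 1 by ring, Real.rpow_add_one hs'.ne']
      have h3 : r ^ (a + 1) = r ^ a * r := by
        rw [Real.rpow_add_one hr.ne']
      rw [hΓ, h3, ← h2]
      field_simp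

/-- Tilting: `∫ s·f(s) dΓ(a,r) = (a/r) ∫ f dΓ(a+1,r)`. -/
lemma tilt {a : ℝ} (ha : 0 < a) {r : ℝ} (hr : 0 < r) {f : ℝ → ℝ≥0∞} (hf : Measurable f) :
    ∫⁻ s, ENNReal.ofReal s * f s ∂(gammaMeasure a r)
      = ENNReal.ofReal (a / r) * ∫⁻ s, f s ∂(gammaMeasure (a + 1) r) := by
  rw [gammaMeasure, gammaMeasure,
    lintegral_withDensity_eq_lintegral_mul _ (measurable_gammaPDF a r)
      (show Measurable fun s : ℝ => ENNReal.ofReal s * f s by fun_prop),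
    lintegral_withDensity_eq_lintegral_mul _ (measurable_gammaPDF (a+1) r) hf]
  simp only [Pi.mul_apply]
  rw [← lintegral_const_mul _ (show Measurable fun s => gammaPDF (a+1) r s * f s from (measurable_gammaPDF (a+1) r).mul hf)]
  refine lintegral_congr fun s => ?_
  rw [← mul_assoc, gammaPDF_mul_self ha r hr, mul_assoc]

/-- A gamma measure puts no mass on `Iic 0`. -/
lemma gamma_Iic_zero (a r : ℝ) : gammaMeasure a r (Iic 0) = 0 := by
  rw [gammaMeasure, withDensity_apply _ measurableSet_Iic]
  have : Iic (0:ℝ) = Iio 0 ∪ {0} := by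
    ext t; simp [le_iff_lt_or_eq]
  rw [this]
  refine le_antisymm (le_trans (lintegral_union_le _ _ _) ?_) zero_le
  rw [lintegral_gammaPDF_of_nonpos le_rfl]
  simp [setLIntegral_measure_zero]

lemma ae_nonneg_prod (μ ν : Measure ℝ) [IsProbabilityMeasure μ] [IsProbabilityMeasure ν]
    (hμ : μ (Iic 0) = 0) (hν : ν (Iic 0) = 0) :
    ∀ᵐ p ∂(μ.prod ν), 0 ≤ p.1 ∧ 0 ≤ p.2 := by
  rw [ae_iff]
  have hsub : {p : ℝ × ℝ | ¬(0 ≤ p.1 ∧ 0 ≤ p.2)} ⊆ (Iic 0 ×ˢ univ) ∪ (univ ×ˢ Iic 0) := by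
    intro p hp
    simp only [mem_setOf_eq, not_and_or, not_le] at hp
    rcases hp with h | h
    · exact Or.inl ⟨h.le, mem_univ _⟩
    · exact Or.inr ⟨mem_univ _, h.le⟩
  refine le_antisymm (le_trans (measure_mono hsub) ?_) zero_le
  refine le_trans (measure_union_le _ _) ?_
  rw [Measure.prod_prod, Measure.prod_prod, hμ, hν]
  simp

lemma core (D N : ℕ) (hD : 0 < D) (hN : 0 < N) (x : ℝ) (hx : 0 ≤ x) :
    (∫⁻ p : ℝ × ℝ, ENNReal.ofReal (max (p.1 - x * p.2 / N) 0)
        ∂((gammaMeasure ((D:ℝ)/2) (1/2)).prod (gammaMeasure ((N:ℝ)/2) (1/2))))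
      + ENNReal.ofReal x *
        ((gammaMeasure ((D:ℝ)/2) (1/2)).prod (gammaMeasure (((N:ℝ)+2)/2) (1/2)))
          {p : ℝ × ℝ | x * p.2 / N ≤ p.1}
      = ENNReal.ofReal D *
        ((gammaMeasure (((D:ℝ)+2)/2) (1/2)).prod (gammaMeasure ((N:ℝ)/2) (1/2)))
          {p : ℝ × ℝ | x * p.2 / N ≤ p.1} := by
  have hDpos : (0:ℝ) < (D:ℝ)/2 := by positivity
  have hNpos : (0:ℝ) < (N:ℝ)/2 := by
    have : (0:ℝ) < (N:ℝ) := by exact_mod_cast hN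
    positivity
  have hDpos' : (0:ℝ) < (D:ℝ) := by exact_mod_cast hD
  have hNpos' : (0:ℝ) < (N:ℝ) := by exact_mod_cast hN
  have hr : (0:ℝ) < 1/2 := by norm_num
  set μ1 := gammaMeasure ((D:ℝ)/2) (1/2) with hμ1
  set μ2 := gammaMeasure ((N:ℝ)/2) (1/2) with hμ2
  set μ1' := gammaMeasure (((D:ℝ)+2)/2) (1/2) with hμ1'
  set μ2' := gammaMeasure (((N:ℝ)+2)/2) (1/2) with hμ2'
  haveI : IsProbabilityMeasure μ1 := isProbabilityMeasure_gammaMeasure (by positivity) hr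
  haveI : IsProbabilityMeasure μ2 := isProbabilityMeasure_gammaMeasure (by positivity) hr
  haveI : IsProbabilityMeasure μ1' := isProbabilityMeasure_gammaMeasure (by positivity) hr
  haveI : IsProbabilityMeasure μ2' := isProbabilityMeasure_gammaMeasure (by positivity) hr
  set Eset : Set (ℝ × ℝ) := {p : ℝ × ℝ | x * p.2 / N ≤ p.1} with hEset
  have hE : MeasurableSet Eset :=
    measurableSet_le (by fun_prop) (by fun_prop)
  set ind : ℝ × ℝ → ℝ≥0∞ := Eset.indicator 1 with hind
  have hindm : Measurable ind := measurable_one.indicator hE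
  -- tilting in the first coordinate
  have key1 : ∫⁻ p, ENNReal.ofReal p.1 * ind p ∂(μ1.prod μ2)
      = ENNReal.ofReal D * (μ1'.prod μ2) Eset := by
    rw [lintegral_prod _ (by fun_prop)]
    dsimp only
    have step : ∀ s : ℝ, (∫⁻ t, ENNReal.ofReal s * ind (s, t) ∂μ2)
        = ENNReal.ofReal s * ∫⁻ t, ind (s, t) ∂μ2 := fun s =>
      lintegral_const_mul _ (show Measurable fun t => ind (s, t) by fun_prop)
    simp only [step]
    have := tilt (a := (D:ℝ)/2) hDpos hr
      (f := fun s => ∫⁻ t, ind (s, t) ∂μ2) (hindm.lintegral_prod_right')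
    rw [show (D:ℝ)/2 + 1 = ((D:ℝ)+2)/2 by ring, show ((D:ℝ)/2)/(1/2) = (D:ℝ) by ring] at this
    rw [← hμ1] at this
    rw [this, ← hμ1', ← lintegral_prod _ (by fun_prop), lintegral_indicator_one hE]
  -- tilting in the second coordinate
  have key2 : ∫⁻ p, ENNReal.ofReal p.2 * ind p ∂(μ1.prod μ2)
      = ENNReal.ofReal N * (μ1.prod μ2') Eset := by
    rw [lintegral_prod_symm _ (by fun_prop)]
    dsimp only
    have step : ∀ t : ℝ, (∫⁻ s, ENNReal.ofReal t * ind (s, t) ∂μ1)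
        = ENNReal.ofReal t * ∫⁻ s, ind (s, t) ∂μ1 := fun t =>
      lintegral_const_mul _ (show Measurable fun s => ind (s, t) by fun_prop)
    simp only [step]
    have := tilt (a := (N:ℝ)/2) hNpos hr
      (f := fun t => ∫⁻ s, ind (s, t) ∂μ1) (hindm.lintegral_prod_left')
    rw [show (N:ℝ)/2 + 1 = ((N:ℝ)+2)/2 by ring, show ((N:ℝ)/2)/(1/2) = (N:ℝ) by ring] at this
    rw [← hμ2] at this
    rw [this, ← hμ2', ← lintegral_prod_symm _ (by fun_prop), lintegral_indicator_one hE]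
  -- pointwise a.e. identity
  have hae : ∀ᵐ p ∂(μ1.prod μ2),
      ENNReal.ofReal (max (p.1 - x * p.2 / N) 0)
        + ENNReal.ofReal (x / N) * (ENNReal.ofReal p.2 * ind p)
      = ENNReal.ofReal p.1 * ind p := by
    filter_upwards [ae_nonneg_prod μ1 μ2 (gamma_Iic_zero _ _) (gamma_Iic_zero _ _)]
      with p hp
    obtain ⟨hs, ht⟩ := hp
    by_cases hmem : p ∈ Eset
    · have hmem' : x * p.2 / N ≤ p.1 := hmem
      rw [hind, Set.indicator_of_mem hmem]
      simp only [Pi.one_apply, mul_one]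
      rw [max_eq_left (sub_nonneg.2 hmem'), ← ENNReal.ofReal_mul (by positivity),
        ← ENNReal.ofReal_add (sub_nonneg.2 hmem') (by positivity)]
      congr 1
      field_simp
      ring
    · have hmem' : p.1 < x * p.2 / N := lt_of_not_ge hmem
      rw [hind, Set.indicator_of_notMem hmem]
      rw [max_eq_right (by linarith), mul_zero, mul_zero, add_zero, ENNReal.ofReal_zero,
        mul_zero]
  -- combine
  have hsum := lintegral_congr_ae hae
  rw [lintegral_add_left (by fun_prop), lintegral_const_mul _ (by fun_prop : Measurable fun p : ℝ × ℝ => ENNReal.ofReal p.2 * ind p)] at hsum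
  rw [key1, key2] at hsum
  rw [← hsum, ← mul_assoc, ← ENNReal.ofReal_mul (by positivity),
    div_mul_cancel₀ x hNpos'.ne']

lemma iff1 {d n x a b : ℝ} (hd : 0 < d) (hn : 0 < n) (hb : 0 < b) :
    x / d ≤ (a / d) / (b / n) ↔ x * b / n ≤ a := by
  rw [le_div_iff₀ (div_pos hb hn), div_mul_div_comm, div_le_div_iff₀ (by positivity) hd,
    div_le_iff₀ hn, show x * b * d = (x * b) * d by ring, show a * (d * n) = (a * n) * d by ring,
    mul_le_mul_iff_of_pos_right hd]

lemma iff2 {d n m x c e : ℝ} (hd : 0 < d) (hn : 0 < n) (hm : 0 < m) (he : 0 < e) :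
    m * x / (d * n) ≤ (c / d) / (e / m) ↔ x * e / n ≤ c := by
  rw [le_div_iff₀ (div_pos he hm), show m * x / (d * n) * (e / m) = (x * e / n) / d by
      field_simp,
    div_le_div_iff₀ hd hd, mul_le_mul_iff_of_pos_right hd]

end Stmt5Aux

open Set Stmt5Aux

/-- For positive integers `D` and `N` and `x ≥ 0`, with `X ~ χ²(D)` and
`Y ~ χ²(N)` independent, one has
`Dkhi(D,N,x) = P(F_{D+2,N} ≥ x/(D+2)) - (x/D)·P(F_{D,N+2} ≥ (N+2)x/(DN))`,
where `Dkhi(D,N,x) = E[(X - x·Y/N)₊]/D` and a Fisher random variable `F_{a,b}` is the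
ratio `(U/a)/(W/b)` of two independent chi-squares `U ~ χ²(a)`, `W ~ χ²(b)` (a chi-square
with `k` degrees of freedom being the Gamma distribution with shape `k/2` and rate `1/2`). -/
theorem stmt_5
    {Ω : Type*} [MeasureSpace Ω] [IsProbabilityMeasure (ℙ : Measure Ω)]
    (D N : ℕ) (hD : 0 < D) (hN : 0 < N) (x : ℝ) (hx : 0 ≤ x)
    (X Y A B C E : Ω → ℝ)
    (hX : Measurable X) (hY : Measurable Y) (hA : Measurable A)
    (hB : Measurable B) (hC : Measurable C) (hE : Measurable E)
    (hXlaw : Measure.map X ℙ = gammaMeasure (D / 2) (1 / 2))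
    (hYlaw : Measure.map Y ℙ = gammaMeasure (N / 2) (1 / 2))
    (hAlaw : Measure.map A ℙ = gammaMeasure ((D + 2) / 2) (1 / 2))
    (hBlaw : Measure.map B ℙ = gammaMeasure (N / 2) (1 / 2))
    (hClaw : Measure.map C ℙ = gammaMeasure (D / 2) (1 / 2))
    (hElaw : Measure.map E ℙ = gammaMeasure ((N + 2) / 2) (1 / 2))
    (hXY : IndepFun X Y ℙ) (hAB : IndepFun A B ℙ) (hCE : IndepFun C E ℙ) :
    (∫ ω, max (X ω - x * Y ω / N) 0 ∂ℙ) / D =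
      (ℙ {ω | (A ω / (D + 2)) / (B ω / N) ≥ x / (D + 2)}).toReal -
        x / D * (ℙ {ω | (C ω / D) / (E ω / (N + 2)) ≥ (N + 2) * x / (D * N)}).toReal := by
  have hDpos' : (0:ℝ) < (D:ℝ) := by exact_mod_cast hD
  have hNpos' : (0:ℝ) < (N:ℝ) := by exact_mod_cast hN
  have hr : (0:ℝ) < 1/2 := by norm_num
  haveI h1 : IsProbabilityMeasure (gammaMeasure ((D:ℝ)/2) (1/2)) :=
    isProbabilityMeasure_gammaMeasure (by positivity) hr
  haveI h2 : IsProbabilityMeasure (gammaMeasure ((N:ℝ)/2) (1/2)) :=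
    isProbabilityMeasure_gammaMeasure (by positivity) hr
  haveI h3 : IsProbabilityMeasure (gammaMeasure (((D:ℝ)+2)/2) (1/2)) :=
    isProbabilityMeasure_gammaMeasure (by positivity) hr
  haveI h4 : IsProbabilityMeasure (gammaMeasure (((N:ℝ)+2)/2) (1/2)) :=
    isProbabilityMeasure_gammaMeasure (by positivity) hr
  have hEm : MeasurableSet {p : ℝ × ℝ | x * p.2 / N ≤ p.1} :=
    measurableSet_le (by fun_prop) (by fun_prop)
  -- joint laws
  have hmXY : Measure.map (fun ω => (X ω, Y ω)) ℙ
      = (gammaMeasure ((D:ℝ)/2) (1/2)).prod (gammaMeasure ((N:ℝ)/2) (1/2)) := by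
    rw [← hXlaw, ← hYlaw]
    exact (indepFun_iff_map_prod_eq_prod_map_map hX.aemeasurable hY.aemeasurable).mp hXY
  have hmAB : Measure.map (fun ω => (A ω, B ω)) ℙ
      = (gammaMeasure (((D:ℝ)+2)/2) (1/2)).prod (gammaMeasure ((N:ℝ)/2) (1/2)) := by
    rw [← hAlaw, ← hBlaw]
    exact (indepFun_iff_map_prod_eq_prod_map_map hA.aemeasurable hB.aemeasurable).mp hAB
  have hmCE : Measure.map (fun ω => (C ω, E ω)) ℙ
      = (gammaMeasure ((D:ℝ)/2) (1/2)).prod (gammaMeasure (((N:ℝ)+2)/2) (1/2)) := by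
    rw [← hClaw, ← hElaw]
    exact (indepFun_iff_map_prod_eq_prod_map_map hC.aemeasurable hE.aemeasurable).mp hCE
  -- the integral as a lintegral over the product measure
  have hInt : ∫ ω, max (X ω - x * Y ω / N) 0 ∂ℙ
      = (∫⁻ p : ℝ × ℝ, ENNReal.ofReal (max (p.1 - x * p.2 / N) 0)
          ∂((gammaMeasure ((D:ℝ)/2) (1/2)).prod (gammaMeasure ((N:ℝ)/2) (1/2)))).toReal := by
    rw [integral_eq_lintegral_of_nonneg_ae (μ := ℙ)
      (f := fun ω => max (X ω - x * Y ω / (N:ℝ)) 0)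
      (ae_of_all _ fun ω => le_max_right _ _)
      (((hX.sub ((hY.const_mul x).div_const N)).max measurable_const).aestronglyMeasurable)]
    congr 1
    rw [← hmXY, lintegral_map (by fun_prop) (hX.prodMk hY)]
  -- the first probability
  have hPAB : ℙ {ω | (A ω / (D + 2)) / (B ω / N) ≥ x / (D + 2)}
      = ((gammaMeasure (((D:ℝ)+2)/2) (1/2)).prod (gammaMeasure ((N:ℝ)/2) (1/2)))
          {p : ℝ × ℝ | x * p.2 / N ≤ p.1} := by
    have hBpos : ∀ᵐ ω ∂ℙ, 0 < B ω := by
      rw [ae_iff]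
      have hset : {ω | ¬ 0 < B ω} = B ⁻¹' (Iic 0) := by ext ω; simp [not_lt]
      rw [hset, ← Measure.map_apply hB measurableSet_Iic, hBlaw]
      exact gamma_Iic_zero _ _
    have hsets : {ω | (A ω / (D + 2)) / (B ω / N) ≥ x / (D + 2)}
        =ᵐ[ℙ] (fun ω => (A ω, B ω)) ⁻¹' {p : ℝ × ℝ | x * p.2 / N ≤ p.1} := by
      rw [Filter.eventuallyEq_set]
      filter_upwards [hBpos] with ω hω
      simpa [ge_iff_le] using iff1 (a := A ω) (by positivity : (0:ℝ) < (D:ℝ)+2) hNpos' hω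
    rw [measure_congr hsets, ← Measure.map_apply (hA.prodMk hB) hEm, hmAB]
  -- the second probability
  have hPCE : ℙ {ω | (C ω / D) / (E ω / (N + 2)) ≥ (N + 2) * x / (D * N)}
      = ((gammaMeasure ((D:ℝ)/2) (1/2)).prod (gammaMeasure (((N:ℝ)+2)/2) (1/2)))
          {p : ℝ × ℝ | x * p.2 / N ≤ p.1} := by
    have hEpos : ∀ᵐ ω ∂ℙ, 0 < E ω := by
      rw [ae_iff]
      have hset : {ω | ¬ 0 < E ω} = E ⁻¹' (Iic 0) := by ext ω; simp [not_lt]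
      rw [hset, ← Measure.map_apply hE measurableSet_Iic, hElaw]
      exact gamma_Iic_zero _ _
    have hsets : {ω | (C ω / D) / (E ω / (N + 2)) ≥ (N + 2) * x / (D * N)}
        =ᵐ[ℙ] (fun ω => (C ω, E ω)) ⁻¹' {p : ℝ × ℝ | x * p.2 / N ≤ p.1} := by
      rw [Filter.eventuallyEq_set]
      filter_upwards [hEpos] with ω hω
      simpa [ge_iff_le] using
        iff2 (c := C ω) hDpos' hNpos' (by positivity : (0:ℝ) < (N:ℝ)+2) hω
    rw [measure_congr hsets, ← Measure.map_apply (hC.prodMk hE) hEm, hmCE]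
  -- core identity
  have hcore := core D N hD hN x hx
  set L : ℝ≥0∞ := ∫⁻ p : ℝ × ℝ, ENNReal.ofReal (max (p.1 - x * p.2 / N) 0)
      ∂((gammaMeasure ((D:ℝ)/2) (1/2)).prod (gammaMeasure ((N:ℝ)/2) (1/2))) with hL
  set Q1 := ((gammaMeasure (((D:ℝ)+2)/2) (1/2)).prod (gammaMeasure ((N:ℝ)/2) (1/2)))
      {p : ℝ × ℝ | x * p.2 / N ≤ p.1} with hQ1
  set Q2 := ((gammaMeasure ((D:ℝ)/2) (1/2)).prod (gammaMeasure (((N:ℝ)+2)/2) (1/2)))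
      {p : ℝ × ℝ | x * p.2 / N ≤ p.1} with hQ2
  have hQ1ne : Q1 ≠ ⊤ := measure_ne_top _ _
  have hQ2ne : Q2 ≠ ⊤ := measure_ne_top _ _
  have hLne : L ≠ ⊤ := by
    have hle : L ≤ ENNReal.ofReal D * Q1 := hcore ▸ le_self_add
    exact (lt_of_le_of_lt hle (ENNReal.mul_lt_top ENNReal.ofReal_lt_top hQ1ne.lt_top)).ne
  have hreal : L.toReal + x * Q2.toReal = (D:ℝ) * Q1.toReal := by
    have hc := congrArg ENNReal.toReal hcore
    rwa [ENNReal.toReal_add hLne (ENNReal.mul_ne_top ENNReal.ofReal_ne_top hQ2ne),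
      ENNReal.toReal_mul, ENNReal.toReal_mul, ENNReal.toReal_ofReal hx,
      ENNReal.toReal_ofReal (by positivity)] at hc
  rw [hInt, hPAB, hPCE]
  field_simp
  linarith
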